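/- Under the family setup, the product of the cosines of the angles of the circumscribed tangent polygon is constant along the family: the function t ↦ ∏_{i=1}^{n} cos(π − δ(ψᵢ(t)) − δ(ψ_{i+1}(t))) is constant on ℝ. (Here βᵢ = π − δ(ψᵢ) − δ(ψ_{i+1}) is the angle of the polygon formed by the tangent lines to the ellipse at the impact points.) -/

import Mathlib

open Real

/-- Telescoping sum over `Icc 1 n`. -/
lemma tele_aux (G : ℕ → ℝ) : ∀ n : ℕ, 1 ≤ n →
    ∑ i ∈ Finset.Icc 1 n, (G i - G (i + 1)) = G 1 - G (n + 1) := by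
  intro n hn
  induction n with
  | zero => omega
  | succ m ih =>
    rcases Nat.eq_or_lt_of_le hn with h1 | h1
    · simp [← h1]
    · have hm : 1 ≤ m := by omega
      rw [Finset.sum_Icc_succ_top (by omega : 1 ≤ m + 1), ih hm]
      ring

/-- Core algebraic identity. -/
lemma core_aux (a b c d u v : ℝ) (hab : a ^ 2 + b ^ 2 = 1) (hcd : c ^ 2 + d ^ 2 = 1)
    (hK : 2 * a * b * v = 2 * c * d * u) :
    (a * d + b * c) * (v - u) * (b * d) = (b * d - a * c) * (c * b * v - a * d * u) := by
  linear_combination (a * b * v) * hcd - (c * d * u) * hab + (1 / 2 : ℝ) * hK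

/-- In a 1-parameter family of billiard `n`-gons in an ellipse, the product of the
cosines of the angles `βᵢ = π - δ(ψᵢ) - δ(ψᵢ₊₁)` of the circumscribed tangent polygon
is constant along the family. -/
theorem stmt_10
    (a₁ a₂ : ℝ) (ha₂ : 0 < a₂) (ha : a₂ < a₁)
    (h : ℝ → ℝ)
    (hh : ∀ x : ℝ, h x = Real.sqrt (a₁ ^ 2 * Real.cos x ^ 2 + a₂ ^ 2 * Real.sin x ^ 2))
    (J : ℝ) (hJ : 0 < J) (hJa : J * a₁ < 1)
    (δ : ℝ → ℝ) (hδ : ∀ x : ℝ, δ x = Real.arcsin (J * h x))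
    (n : ℕ) (hn : 3 ≤ n)
    (ψ : ℕ → ℝ → ℝ)
    (hdiff : ∀ i ∈ Finset.Icc 1 n, Differentiable ℝ (ψ i))
    (hwrap : ∀ t : ℝ, ψ (n + 1) t = ψ 1 t + 2 * Real.pi)
    (hrel : ∀ t : ℝ, ∀ i ∈ Finset.Icc 1 n,
        ψ (i + 1) t - ψ i t = δ (ψ i t) + δ (ψ (i + 1) t))
    (hgen : ∀ t : ℝ, ∀ i ∈ Finset.Icc 1 n,
        h (ψ i t) * Real.cos (δ (ψ i t)) + deriv h (ψ i t) * Real.sin (δ (ψ i t))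
          = h (ψ (i + 1) t) * Real.cos (δ (ψ (i + 1) t))
            - deriv h (ψ (i + 1) t) * Real.sin (δ (ψ (i + 1) t)))
    (hreg : ∀ t : ℝ, ∀ i ∈ Finset.Icc 1 n,
        Real.sin (2 * δ (ψ i t)) ≠ 0 ∧ deriv δ (ψ i t) ≠ 1)
    (t s : ℝ) :
    ∏ i ∈ Finset.Icc 1 n, Real.cos (Real.pi - δ (ψ i t) - δ (ψ (i + 1) t))
      = ∏ i ∈ Finset.Icc 1 n, Real.cos (Real.pi - δ (ψ i s) - δ (ψ (i + 1) s)) := by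
  -- basic facts about the support function
  set r : ℝ → ℝ := fun x => a₁ ^ 2 * Real.cos x ^ 2 + a₂ ^ 2 * Real.sin x ^ 2 with hr
  have hrpos : ∀ x, 0 < r x := by
    intro x
    show 0 < a₁ ^ 2 * Real.cos x ^ 2 + a₂ ^ 2 * Real.sin x ^ 2
    have := Real.sin_sq_add_cos_sq x
    have h12 : a₂ ^ 2 ≤ a₁ ^ 2 := by nlinarith
    nlinarith [mul_nonneg (sub_nonneg.2 h12) (sq_nonneg (Real.cos x)), pow_pos ha₂ 2]
  have hrle : ∀ x, r x ≤ a₁ ^ 2 := by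
    intro x
    show a₁ ^ 2 * Real.cos x ^ 2 + a₂ ^ 2 * Real.sin x ^ 2 ≤ a₁ ^ 2
    have := Real.sin_sq_add_cos_sq x
    have h12 : a₂ ^ 2 ≤ a₁ ^ 2 := by nlinarith
    nlinarith [mul_nonneg (sub_nonneg.2 h12) (sq_nonneg (Real.sin x))]
  have hhr : h = fun x => Real.sqrt (r x) := funext hh
  have hhpos : ∀ x, 0 < h x := fun x => by
    rw [hh]; exact Real.sqrt_pos.2 (hrpos x)
  have hhle : ∀ x, h x ≤ a₁ := by
    intro x
    rw [hh]
    calc Real.sqrt (r x) ≤ Real.sqrt (a₁ ^ 2) := Real.sqrt_le_sqrt (hrle x)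
    _ = a₁ := Real.sqrt_sq (by linarith)
  have hJh0 : ∀ x, 0 < J * h x := fun x => mul_pos hJ (hhpos x)
  have hJh1 : ∀ x, J * h x < 1 := by
    intro x
    calc J * h x ≤ J * a₁ := by
          have := hhle x; nlinarith
    _ < 1 := hJa
  have hsinδ : ∀ x, Real.sin (δ x) = J * h x := by
    intro x
    rw [hδ, Real.sin_arcsin (by linarith [hJh0 x]) (le_of_lt (hJh1 x))]
  have hcosδ : ∀ x, Real.cos (δ x) = Real.sqrt (1 - (J * h x) ^ 2) := by
    intro x; rw [hδ, Real.cos_arcsin]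
  have hcospos : ∀ x, 0 < Real.cos (δ x) := by
    intro x
    rw [hcosδ]
    apply Real.sqrt_pos.2
    nlinarith [hJh0 x, hJh1 x]
  -- differentiability of h
  have hDh : ∀ x, HasDerivAt h (deriv h x) x := by
    intro x
    apply DifferentiableAt.hasDerivAt
    rw [hhr]
    exact DifferentiableAt.sqrt (by fun_prop) (ne_of_gt (hrpos x))
  -- differentiability of δ with chain rule relation
  have hδd : ∀ x, HasDerivAt δ (1 / Real.sqrt (1 - (J * h x) ^ 2) * (J * deriv h x)) x := by
    intro x
    have harc : HasDerivAt Real.arcsin (1 / Real.sqrt (1 - (J * h x) ^ 2)) (J * h x) :=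
      Real.hasDerivAt_arcsin (by linarith [hJh0 x]) (ne_of_lt (hJh1 x))
    have hin : HasDerivAt (fun y => J * h y) (J * deriv h x) x := (hDh x).const_mul J
    have hfun : δ = fun y => Real.arcsin (J * h y) := funext hδ
    rw [hfun]
    exact HasDerivAt.comp x harc hin
  have hDδ : ∀ x, HasDerivAt δ (deriv δ x) x := by
    intro x
    rw [(hδd x).deriv]
    exact hδd x
  have hchain : ∀ x, Real.cos (δ x) * deriv δ x = J * deriv h x := by
    intro x
    rw [(hδd x).deriv, hcosδ]
    have hs : Real.sqrt (1 - (J * h x) ^ 2) ≠ 0 := by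
      apply ne_of_gt; apply Real.sqrt_pos.2; nlinarith [hJh0 x, hJh1 x]
    field_simp
    rw [mul_pow] at hs
    exact mul_div_cancel_left₀ _ hs
  -- periodicity
  have hper : ∀ x, δ (x + 2 * Real.pi) = δ x := by
    intro x
    rw [hδ, hδ, hh, hh]
    simp [Real.cos_add_two_pi, Real.sin_add_two_pi]
  have hperδ : (fun y => δ (y + 2 * Real.pi)) = δ := funext hper
  have hperD : ∀ x, deriv δ (x + 2 * Real.pi) = deriv δ x := by
    intro x
    rw [← deriv_comp_add_const, hperδ]
  have hψw : ψ (n + 1) = fun τ => ψ 1 τ + 2 * Real.pi := funext hwrap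
  -- extended differentiability
  have hdiff' : ∀ i ∈ Finset.Icc 1 (n + 1), Differentiable ℝ (ψ i) := by
    intro i hi
    simp only [Finset.mem_Icc] at hi
    rcases Nat.lt_or_ge i (n + 1) with h' | h'
    · exact hdiff i (Finset.mem_Icc.2 ⟨hi.1, by omega⟩)
    · have : i = n + 1 := by omega
      subst this
      rw [hψw]
      exact (hdiff 1 (Finset.mem_Icc.2 ⟨le_refl 1, by omega⟩)).add_const _
  -- extended regularity
  have hreg' : ∀ τ : ℝ, ∀ i ∈ Finset.Icc 1 (n + 1),
      Real.sin (2 * δ (ψ i τ)) ≠ 0 ∧ deriv δ (ψ i τ) ≠ 1 := by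
    intro τ i hi
    simp only [Finset.mem_Icc] at hi
    rcases Nat.lt_or_ge i (n + 1) with h' | h'
    · exact hreg τ i (Finset.mem_Icc.2 ⟨hi.1, by omega⟩)
    · have : i = n + 1 := by omega
      subst this
      rw [hwrap, hper, hperD]
      exact hreg τ 1 (Finset.mem_Icc.2 ⟨le_refl 1, by omega⟩)
  -- the weight functions
  set B : ℕ → ℝ → ℝ := fun j τ => Real.tan (δ (ψ j τ)) * deriv (ψ j) τ with hB
  have hBper : ∀ τ, B (n + 1) τ = B 1 τ := by
    intro τ
    simp only [hB]
    rw [hwrap, hper]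
    congr 1
    rw [hψw, deriv_add_const]
  -- per edge derivative
  have edge : ∀ τ : ℝ, ∀ i ∈ Finset.Icc 1 n,
      HasDerivAt (fun σ => -Real.cos (ψ (i + 1) σ - ψ i σ))
        ((-Real.cos (ψ (i + 1) τ - ψ i τ)) * (B i τ - B (i + 1) τ)) τ := by
    intro τ i hi
    have hi' : i ∈ Finset.Icc 1 (n + 1) := by
      simp only [Finset.mem_Icc] at hi ⊢; omega
    have hi1 : i + 1 ∈ Finset.Icc 1 (n + 1) := by
      simp only [Finset.mem_Icc] at hi ⊢; omega
    set p := ψ i τ with hp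
    set q := ψ (i + 1) τ with hq
    set u := deriv (ψ i) τ with hu'
    set v := deriv (ψ (i + 1)) τ with hv'
    have hu : HasDerivAt (ψ i) u τ := ((hdiff' i hi') τ).hasDerivAt
    have hv : HasDerivAt (ψ (i + 1)) v τ := ((hdiff' (i + 1) hi1) τ).hasDerivAt
    have h1 : HasDerivAt (fun σ => ψ (i + 1) σ - ψ i σ) (v - u) τ := hv.sub hu
    -- derivative of the reflection relation
    have h2 : HasDerivAt (fun σ => δ (ψ i σ) + δ (ψ (i + 1) σ))
        (deriv δ p * u + deriv δ q * v) τ :=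
      (HasDerivAt.comp τ (hDδ p) hu).add (HasDerivAt.comp τ (hDδ q) hv)
    have heqf : (fun σ => ψ (i + 1) σ - ψ i σ)
        = fun σ => δ (ψ i σ) + δ (ψ (i + 1) σ) := funext (fun σ => hrel σ i hi)
    have star : v - u = deriv δ p * u + deriv δ q * v := (heqf ▸ h1).unique h2
    -- the support relation in trig form
    have hgg := hgen τ i hi
    have e1 : J * h p = Real.sin (δ p) := (hsinδ p).symm
    have e2 : Real.cos (δ p) * deriv δ p = J * deriv h p := hchain p
    have e3 : J * h q = Real.sin (δ q) := (hsinδ q).symm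
    have e4 : Real.cos (δ q) * deriv δ q = J * deriv h q := hchain q
    have dstar : 2 * Real.sin (δ p) * Real.cos (δ p) * (1 + deriv δ p)
        = 2 * Real.sin (δ q) * Real.cos (δ q) * (1 - deriv δ q) := by
      linear_combination 2 * J * hgg - 2 * Real.cos (δ p) * e1 + 2 * Real.sin (δ p) * e2
        + 2 * Real.cos (δ q) * e3 + 2 * Real.sin (δ q) * e4
    -- the key proportionality
    have hq1 : deriv δ q ≠ 1 := (hreg' τ (i + 1) hi1).2
    have hKey : 2 * Real.sin (δ p) * Real.cos (δ p) * v
        = 2 * Real.sin (δ q) * Real.cos (δ q) * u := by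
      have hc : (1 - deriv δ q) ≠ 0 := sub_ne_zero.2 (Ne.symm hq1)
      apply mul_left_cancel₀ hc
      linear_combination (2 * Real.sin (δ p) * Real.cos (δ p)) * star + u * dstar
    -- assemble
    have hder : HasDerivAt (fun σ => -Real.cos (ψ (i + 1) σ - ψ i σ))
        (Real.sin (q - p) * (v - u)) τ := by
      have := (HasDerivAt.comp τ (Real.hasDerivAt_cos (q - p)) h1).neg
      exact this.congr_deriv (by ring)
    convert hder using 1
    have hpq : q - p = δ p + δ q := hrel τ i hi
    rw [hpq, Real.sin_add, Real.cos_add]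
    simp only [hB, Real.tan_eq_sin_div_cos, ← hp, ← hq, ← hu', ← hv']
    have hcp : Real.cos (δ p) ≠ 0 := ne_of_gt (hcospos p)
    have hcq : Real.cos (δ q) ≠ 0 := ne_of_gt (hcospos q)
    have habp : Real.sin (δ p) ^ 2 + Real.cos (δ p) ^ 2 = 1 := Real.sin_sq_add_cos_sq _
    have habq : Real.sin (δ q) ^ 2 + Real.cos (δ q) ^ 2 = 1 := Real.sin_sq_add_cos_sq _
    have hcore := core_aux (Real.sin (δ p)) (Real.cos (δ p)) (Real.sin (δ q)) (Real.cos (δ q))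
      u v habp habq hKey
    field_simp
    linear_combination (-(Real.sin (δ p) * Real.cos (δ p) * v)) * habq
      + (Real.sin (δ q) * Real.cos (δ q) * u) * habp - (1 / 2 : ℝ) * hKey
  -- the global function
  set F : ℝ → ℝ := fun τ => ∏ i ∈ Finset.Icc 1 n, (-Real.cos (ψ (i + 1) τ - ψ i τ)) with hF
  have hFder : ∀ τ : ℝ, HasDerivAt F 0 τ := by
    intro τ
    have hprod := HasDerivAt.finset_prod
      (u := Finset.Icc 1 n)
      (f := fun i σ => -Real.cos (ψ (i + 1) σ - ψ i σ))
      (f' := fun i => (-Real.cos (ψ (i + 1) τ - ψ i τ)) * (B i τ - B (i + 1) τ))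
      (x := τ) (fun i hi => edge τ i hi)
    have hsum : (∑ i ∈ Finset.Icc 1 n,
        (∏ j ∈ (Finset.Icc 1 n).erase i, (-Real.cos (ψ (j + 1) τ - ψ j τ)))
          • ((-Real.cos (ψ (i + 1) τ - ψ i τ)) * (B i τ - B (i + 1) τ))) = 0 := by
      have : ∀ i ∈ Finset.Icc 1 n,
          (∏ j ∈ (Finset.Icc 1 n).erase i, (-Real.cos (ψ (j + 1) τ - ψ j τ)))
            • ((-Real.cos (ψ (i + 1) τ - ψ i τ)) * (B i τ - B (i + 1) τ))
          = F τ * (B i τ - B (i + 1) τ) := by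
        intro i hi
        simp only [smul_eq_mul, hF]
        rw [← Finset.mul_prod_erase (Finset.Icc 1 n)
          (fun j => -Real.cos (ψ (j + 1) τ - ψ j τ)) hi]
        ring
      rw [Finset.sum_congr rfl this, ← Finset.mul_sum,
        tele_aux (fun i => B i τ) n (by omega), hBper]
      ring
    rw [← hsum]
    have hF' : F = ∏ i ∈ Finset.Icc 1 n, fun σ => -Real.cos (ψ (i + 1) σ - ψ i σ) := by
      ext σ
      simp only [hF, Finset.prod_apply]
    rw [hF']
    exact hprod
  have hFc : F t = F s :=
    is_const_of_deriv_eq_zero (fun x => (hFder x).differentiableAt)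
      (fun x => (hFder x).deriv) t s
  have hgoal : ∀ τ : ℝ, ∏ i ∈ Finset.Icc 1 n,
      Real.cos (Real.pi - δ (ψ i τ) - δ (ψ (i + 1) τ)) = F τ := by
    intro τ
    apply Finset.prod_congr rfl
    intro i hi
    rw [sub_sub, Real.cos_pi_sub, ← hrel τ i hi]
  rw [hgoal t, hgoal s, hFc]
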